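/- Let X be a d-regular simple graph with d odd and d ≥ 3, and suppose X is class I (i.e., χ'(X) = d). Then there exists a cyclic truncation of X that is class I, i.e., has chromatic index 3. -/

import Mathlib

open SimpleGraph

/-- A proper edge coloring of a simple graph: distinct edges sharing a vertex
receive distinct colors. -/
def IsProperEdgeColoring {V α : Type*} (G : SimpleGraph V) (C : Sym2 V → α) : Prop :=
  ∀ e₁ ∈ G.edgeSet, ∀ e₂ ∈ G.edgeSet, e₁ ≠ e₂ → (∃ v, v ∈ e₁ ∧ v ∈ e₂) → C e₁ ≠ C e₂

/-- The chromatic index: least number of colors admitting a proper edge coloring. -/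
noncomputable def chromIndex {V : Type*} (G : SimpleGraph V) : ℕ :=
  sInf {k | ∃ C : Sym2 V → Fin k, IsProperEdgeColoring G C}

/-- Degree of a vertex. -/
noncomputable def deg {V : Type*} (G : SimpleGraph V) (v : V) : ℕ :=
  (G.neighborSet v).ncard

/-- Maximum degree. -/
noncomputable def maxDeg {V : Type*} (G : SimpleGraph V) : ℕ :=
  sSup (Set.range (deg G))

/-- A graph is class I if its chromatic index equals its maximum degree. -/
def ClassI {V : Type*} (G : SimpleGraph V) : Prop := chromIndex G = maxDeg G

/-- The sun over `G`: attach one pendant edge at each vertex of `G`. -/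
def sun {V : Type*} (G : SimpleGraph V) : SimpleGraph (V ⊕ V) :=
  SimpleGraph.fromRel (fun x y =>
    (∃ u v, G.Adj u v ∧ x = Sum.inl u ∧ y = Sum.inl v) ∨
    (∃ v, x = Sum.inl v ∧ y = Sum.inr v))

/-- The pendant edge of the sun attached at vertex `v`. -/
def pendant {V : Type*} (v : V) : Sym2 (V ⊕ V) := s(Sum.inl v, Sum.inr v)

/-- The generalized truncation of `X` determined by the graph `H` on the darts of `X`:
each dart is joined to its reverse dart (the matching `M_F`) and the edges of `H`
(the constituent edges) are added. -/
def trunc {V : Type*} (X : SimpleGraph V) (H : SimpleGraph X.Dart) : SimpleGraph X.Dart :=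
  SimpleGraph.fromRel (fun d d' => d' = d.symm ∨ H.Adj d d')

/-- The constituent graph `H` respects clusters: its edges join only darts with the
same initial vertex. -/
def RespectsClusters {V : Type*} (X : SimpleGraph V) (H : SimpleGraph X.Dart) : Prop :=
  ∀ d d' : X.Dart, H.Adj d d' → d.toProd.1 = d'.toProd.1

/-- The cluster at `v`: darts with initial vertex `v`. -/
def cluster {V : Type*} (X : SimpleGraph V) (v : V) : Set X.Dart :=
  {d : X.Dart | d.toProd.1 = v}

/-- The constituent at `v`, as a graph in its own right. -/
def constituent {V : Type*} (X : SimpleGraph V) (H : SimpleGraph X.Dart) (v : V) :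
    SimpleGraph (cluster X v) := H.induce (cluster X v)

/-- The complete truncation: every constituent is the complete graph on its cluster. -/
def completeTrunc {V : Type*} (X : SimpleGraph V) : SimpleGraph X.Dart :=
  trunc X (SimpleGraph.fromRel (fun d d' => d.toProd.1 = d'.toProd.1))

/-- `X` has no isolated vertices. -/
def NoIsolated {V : Type*} (X : SimpleGraph V) : Prop := ∀ v : V, ∃ w, X.Adj v w

/-- The number of edges of `X` of color `k` incident with `v`. -/
noncomputable def colorCountAt {V α : Type*} (X : SimpleGraph V) (c : Sym2 V → α)
    (v : V) (k : α) : ℕ :=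
  {e | e ∈ X.edgeSet ∧ v ∈ e ∧ c e = k}.ncard

/-- An edge coloring (not necessarily proper) is parity-balanced if for every vertex `v`
and every color `k`, the number of edges of color `k` incident with `v` has the same
parity as the degree of `v`. -/
def ParityBalanced {V : Type*} {m : ℕ} (X : SimpleGraph V) (c : Sym2 V → Fin m) : Prop :=
  ∀ (v : V) (k : Fin m), colorCountAt X c v k % 2 = deg X v % 2

/-- The edges of the sun centered at the constituent at `v`: the constituent edges
at `v` together with the matching edges incident with the cluster at `v`. -/
def sunEdges {V : Type*} (X : SimpleGraph V) (H : SimpleGraph X.Dart) (v : V) :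
    Set (Sym2 X.Dart) :=
  {e | e ∈ (trunc X H).edgeSet ∧ ∃ d : X.Dart, d ∈ e ∧ d.toProd.1 = v}

/-- `H` describes a cyclic truncation of `X`: it respects clusters and every
constituent is a cycle on its cluster. -/
def CyclicConstituents {V : Type*} (X : SimpleGraph V) (H : SimpleGraph X.Dart) : Prop :=
  RespectsClusters X H ∧ (∀ d : X.Dart, deg H d = 2) ∧
    ∀ v : V, (constituent X H v).Connected


def auxCyc (a b : ℕ) : Fin 3 :=
  if max a b = min a b + 1 then (if min a b % 2 = 0 then 0 else 1) else 2

def auxMat (d a b : ℕ) : Fin 3 :=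
  if max a b = d - 1 then 0 else if min a b = 0 then 1 else 2

lemma auxCyc_comm (a b : ℕ) : auxCyc a b = auxCyc b a := by
  simp [auxCyc, Nat.max_comm, Nat.min_comm]

lemma auxMat_comm (d a b : ℕ) : auxMat d a b = auxMat d b a := by
  simp [auxMat, Nat.max_comm, Nat.min_comm]

lemma threeDistinct (d j : ℕ) (hd : Odd d) (hd3 : 3 ≤ d) (hj : j < d) :
    auxCyc j ((j+1) % d) ≠ auxCyc j ((j+(d-1)) % d) ∧
    auxCyc j ((j+1) % d) ≠ auxMat d j j ∧
    auxCyc j ((j+(d-1)) % d) ≠ auxMat d j j := by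
  obtain ⟨m, hm⟩ := hd
  rcases eq_or_ne j 0 with rfl | hj0
  · rw [Nat.mod_eq_of_lt (by omega : 0+1 < d),
        Nat.mod_eq_of_lt (by omega : 0+(d-1) < d)]
    have h3 : auxCyc 0 (0+1) = 0 := by
      unfold auxCyc
      rw [if_pos (by omega), if_pos (by omega)]
    have h4 : auxCyc 0 (0+(d-1)) = 2 := by
      unfold auxCyc
      rw [if_neg (by omega)]
    have h5 : auxMat d 0 0 = 1 := by
      unfold auxMat
      rw [if_neg (by omega), if_pos (by omega)]
    rw [h3, h4, h5]; refine ⟨by decide, by decide, by decide⟩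
  rcases eq_or_ne j (d-1) with rfl | hjd
  · rw [show d-1+1 = d by omega, Nat.mod_self,
        show d-1+(d-1) = d + (d-2) by omega, Nat.add_mod_left,
        Nat.mod_eq_of_lt (by omega : d - 2 < d)]
    have h3 : auxCyc (d-1) 0 = 2 := by
      unfold auxCyc
      rw [if_neg (by omega)]
    have h4 : auxCyc (d-1) (d-2) = 1 := by
      unfold auxCyc
      rw [if_pos (by omega), if_neg (by omega)]
    have h5 : auxMat d (d-1) (d-1) = 0 := by
      unfold auxMat
      rw [if_pos (by omega)]
    rw [h3, h4, h5]; refine ⟨by decide, by decide, by decide⟩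
  · rw [Nat.mod_eq_of_lt (by omega : j+1 < d),
        show j+(d-1) = d + (j-1) by omega, Nat.add_mod_left,
        Nat.mod_eq_of_lt (by omega : j - 1 < d)]
    have h5 : auxMat d j j = 2 := by
      unfold auxMat
      rw [if_neg (by omega), if_neg (by omega)]
    rcases Nat.even_or_odd j with he | ho
    · have e1 : j % 2 = 0 := Nat.even_iff.mp he
      have h3 : auxCyc j (j+1) = 0 := by
        unfold auxCyc
        rw [if_pos (by omega), if_pos (by omega)]
      have h4 : auxCyc j (j-1) = 1 := by
        unfold auxCyc
        rw [if_pos (by omega), if_neg (by omega)]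
      rw [h3, h4, h5]; refine ⟨by decide, by decide, by decide⟩
    · have e1 : j % 2 = 1 := Nat.odd_iff.mp ho
      have h3 : auxCyc j (j+1) = 1 := by
        unfold auxCyc
        rw [if_pos (by omega), if_neg (by omega)]
      have h4 : auxCyc j (j-1) = 0 := by
        unfold auxCyc
        rw [if_pos (by omega), if_pos (by omega)]
      rw [h3, h4, h5]; refine ⟨by decide, by decide, by decide⟩
/-! ### Auxiliary material for `stmt11` -/

private lemma stmt11.modvals (d j : ℕ) (hd3 : 3 ≤ d) (hj : j < d) :
    (j+1) % d ≠ j ∧ (j+(d-1)) % d ≠ j ∧ (j+1) % d ≠ (j+(d-1)) % d ∧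
    ((j+1) % d + (d-1)) % d = j ∧ ((j+(d-1)) % d + 1) % d = j := by
  rcases eq_or_ne j 0 with rfl | hj0
  · rw [Nat.mod_eq_of_lt (by omega : 0+1 < d),
        Nat.mod_eq_of_lt (by omega : 0+(d-1) < d),
        show 0+1+(d-1) = d by omega, Nat.mod_self,
        show 0+(d-1)+1 = d by omega, Nat.mod_self]
    omega
  rcases eq_or_ne j (d-1) with rfl | hjd
  · rw [show d-1+1 = d by omega, Nat.mod_self,
        show d-1+(d-1) = d+(d-2) by omega, Nat.add_mod_left,
        Nat.mod_eq_of_lt (by omega : d-2 < d),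
        Nat.mod_eq_of_lt (by omega : 0+(d-1) < d),
        show d-2+1 = d-1 by omega, Nat.mod_eq_of_lt (by omega : d-1 < d)]
    omega
  · rw [Nat.mod_eq_of_lt (by omega : j+1 < d),
        show j+(d-1) = d+(j-1) by omega, Nat.add_mod_left,
        Nat.mod_eq_of_lt (by omega : j-1 < d),
        show j+1+(d-1) = d+j by omega, Nat.add_mod_left,
        Nat.mod_eq_of_lt hj,
        show j-1+1 = j by omega, Nat.mod_eq_of_lt hj]
    omega

/-- the cyclic successor on `Fin d` -/
def stmt11.nxF {d : ℕ} (j : Fin d) : Fin d :=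
  ⟨(j.val + 1) % d, Nat.mod_lt _ (Nat.lt_of_le_of_lt (Nat.zero_le _) j.isLt)⟩

/-- the cyclic predecessor on `Fin d` -/
def stmt11.pvF {d : ℕ} (j : Fin d) : Fin d :=
  ⟨(j.val + (d-1)) % d, Nat.mod_lt _ (Nat.lt_of_le_of_lt (Nat.zero_le _) j.isLt)⟩

private lemma stmt11.nxF_ne {d : ℕ} (hd3 : 3 ≤ d) (j : Fin d) : stmt11.nxF j ≠ j := by
  have h := stmt11.modvals d j.val hd3 j.isLt
  intro hcon
  exact h.1 (congrArg Fin.val hcon)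

private lemma stmt11.pvF_ne {d : ℕ} (hd3 : 3 ≤ d) (j : Fin d) : stmt11.pvF j ≠ j := by
  have h := stmt11.modvals d j.val hd3 j.isLt
  intro hcon
  exact h.2.1 (congrArg Fin.val hcon)

private lemma stmt11.nxF_ne_pvF {d : ℕ} (hd3 : 3 ≤ d) (j : Fin d) :
    stmt11.nxF j ≠ stmt11.pvF j := by
  have h := stmt11.modvals d j.val hd3 j.isLt
  intro hcon
  exact h.2.2.1 (congrArg Fin.val hcon)

private lemma stmt11.pvF_nxF {d : ℕ} (hd3 : 3 ≤ d) (j : Fin d) :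
    stmt11.pvF (stmt11.nxF j) = j := by
  have h := stmt11.modvals d j.val hd3 j.isLt
  exact Fin.ext h.2.2.2.1

private lemma stmt11.nxF_pvF {d : ℕ} (hd3 : 3 ≤ d) (j : Fin d) :
    stmt11.nxF (stmt11.pvF j) = j := by
  have h := stmt11.modvals d j.val hd3 j.isLt
  exact Fin.ext h.2.2.2.2
open scoped Classical in
/-- The 3-coloring of a truncation derived from an edge coloring `C` of `X`. -/
noncomputable def auxCol {V : Type*} (X : SimpleGraph V) {d : ℕ} (C : Sym2 V → Fin d) :
    Sym2 X.Dart → Fin 3 :=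
  Sym2.lift ⟨fun d1 d2 =>
    if d1.toProd.1 = d2.toProd.1 then auxCyc (C d1.edge).val (C d2.edge).val
    else auxMat d (C d1.edge).val (C d2.edge).val, by
      intro d1 d2
      dsimp only
      rcases eq_or_ne d1.toProd.1 d2.toProd.1 with h | h
      · rw [if_pos h, if_pos h.symm, auxCyc_comm]
      · rw [if_neg h, if_neg (Ne.symm h), auxMat_comm]⟩

open scoped Classical in
lemma auxCol_mk {V : Type*} (X : SimpleGraph V) {d : ℕ} (C : Sym2 V → Fin d)
    (d1 d2 : X.Dart) : auxCol X C s(d1, d2) =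
    if d1.toProd.1 = d2.toProd.1 then auxCyc (C d1.edge).val (C d2.edge).val
    else auxMat d (C d1.edge).val (C d2.edge).val := rfl

/-- darts with equal initial vertex and equal edge coincide -/
lemma dart_eq_of_fst_edge {V : Type*} {X : SimpleGraph V} {d1 d2 : X.Dart}
    (hfst : d1.toProd.1 = d2.toProd.1) (he : d1.edge = d2.edge) : d1 = d2 := by
  obtain ⟨⟨a, b⟩, hab⟩ := d1
  obtain ⟨⟨a', b'⟩, hab'⟩ := d2
  simp only at hfst
  subst hfst
  apply Dart.ext
  replace he := Sym2.mk_eq_mk_iff.mp he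
  rcases he with h | h
  · exact h
  · simp only [Prod.swap_prod_mk, Prod.mk.injEq] at h
    obtain ⟨h1, h2⟩ := h
    subst h1; subst h2
    exact absurd hab (X.irrefl ·)

/-- under a proper coloring, distinct darts at the same vertex get distinct colors -/
lemma dart_color_inj {V : Type*} {X : SimpleGraph V} {d : ℕ} {C : Sym2 V → Fin d}
    (hC : IsProperEdgeColoring X C) {d1 d2 : X.Dart}
    (hfst : d1.toProd.1 = d2.toProd.1) (hcol : C d1.edge = C d2.edge) : d1 = d2 := by
  by_cases he : d1.edge = d2.edge
  · exact dart_eq_of_fst_edge hfst he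
  · exact absurd hcol (hC _ d1.edge_mem _ d2.edge_mem he
      ⟨d1.toProd.1, Sym2.mem_mk_left _ _, hfst ▸ Sym2.mem_mk_left _ _⟩)

/-- existence and uniqueness of the dart at `v` with a given color -/
lemma exists_unique_dart {V : Type*} [Fintype V] {X : SimpleGraph V} {d : ℕ}
    {C : Sym2 V → Fin d} (hC : IsProperEdgeColoring X C)
    (hreg : ∀ v, (X.neighborSet v).ncard = d) (v : V) (j : Fin d) :
    ∃ dt : X.Dart, (dt.toProd.1 = v ∧ C dt.edge = j) ∧
      ∀ dt' : X.Dart, dt'.toProd.1 = v → C dt'.edge = j → dt' = dt := by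
  classical
  have hfin : Finite X.Dart := by
    exact Finite.of_injective (fun dt => dt.toProd) (fun a b h => Dart.ext _ _ h)
  set T := {dt : X.Dart // dt.toProd.1 = v} with hT
  haveI : Finite T := Subtype.finite
  haveI : Fintype T := Fintype.ofFinite T
  let Φ : T → Fin d := fun dt => C dt.1.edge
  have hinj : Function.Injective Φ := by
    intro a b h
    exact Subtype.ext (dart_color_inj hC (a.2.trans b.2.symm) h)
  have hcard : Fintype.card T = d := by
    have e : T ≃ X.neighborSet v :=
      { toFun := fun dt => ⟨dt.1.toProd.2, by have h := dt.1.adj; rwa [dt.2] at h⟩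
        invFun := fun w => ⟨⟨(v, w.1), w.2⟩, rfl⟩
        left_inv := by
          rintro ⟨⟨⟨a, b⟩, hab⟩, h⟩
          simp only at h
          subst h
          rfl
        right_inv := fun w => rfl }
    rw [Fintype.card_congr e]
    have h := hreg v
    rw [← Nat.card_coe_set_eq, Nat.card_eq_fintype_card] at h
    exact h
  have hbij : Function.Bijective Φ :=
    (Fintype.bijective_iff_injective_and_card Φ).mpr ⟨hinj, by simp [hcard]⟩
  obtain ⟨⟨dt, hdt⟩, hΦ⟩ := hbij.2 j
  exact ⟨dt, ⟨hdt, hΦ⟩, fun dt' h1 h2 =>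
    dart_color_inj hC (h1.trans hdt.symm) (h2.trans hΦ.symm)⟩
/-- a class I `d`-regular graph with `d` odd, `d ≥ 3`, has a class I
cyclic truncation. -/
theorem stmt11 {V : Type*} [Fintype V] (X : SimpleGraph V) (d : ℕ) (hd : Odd d)
    (hd3 : 3 ≤ d) (hreg : ∀ v, deg X v = d) (hclass : chromIndex X = d) :
    ∃ H : SimpleGraph X.Dart, CyclicConstituents X H ∧
      chromIndex (trunc X H) = 3 := by
  classical
  open stmt11 in
  -- obtain a proper edge coloring of `X` with `d` colors
  have hSne : {k | ∃ C : Sym2 V → Fin k, IsProperEdgeColoring X C}.Nonempty := by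
    by_contra h
    rw [Set.not_nonempty_iff_eq_empty] at h
    have h0 : chromIndex X = 0 := by rw [chromIndex, h, Nat.sInf_empty]
    omega
  have hdS : ∃ C : Sym2 V → Fin d, IsProperEdgeColoring X C := by
    rw [← hclass]
    exact Nat.sInf_mem hSne
  obtain ⟨C, hC⟩ := hdS
  have hV : Nonempty V := by
    by_contra h
    rw [not_nonempty_iff] at h
    haveI : IsEmpty (Sym2 V) := ⟨fun e => Sym2.ind (fun x _ => h.elim x) e⟩
    have h0 : (0:ℕ) ∈ {k | ∃ C : Sym2 V → Fin k, IsProperEdgeColoring X C} :=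
      ⟨fun e => isEmptyElim e, fun e _ => isEmptyElim e⟩
    have : chromIndex X = 0 := Nat.sInf_eq_zero.mpr (Or.inl h0)
    omega
  have hreg' : ∀ v, (X.neighborSet v).ncard = d := hreg
  have exU := fun v j => exists_unique_dart hC hreg' v j
  choose D hD hDuniq using exU
  have hDfst : ∀ (v : V) (j : Fin d), (D v j).toProd.1 = v := fun v j => (hD v j).1
  have hDcol : ∀ (v : V) (j : Fin d), C (D v j).edge = j := fun v j => (hD v j).2
  -- the cyclic constituents
  set H : SimpleGraph X.Dart := SimpleGraph.fromRel
    (fun d1 d2 => d1.toProd.1 = d2.toProd.1 ∧ C d2.edge = nxF (C d1.edge)) with hH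
  -- adjacency in H
  have hHadj : ∀ d1 d2 : X.Dart, H.Adj d1 d2 ↔
      d1.toProd.1 = d2.toProd.1 ∧
        (C d2.edge = nxF (C d1.edge) ∨ C d2.edge = pvF (C d1.edge)) := by
    intro d1 d2
    rw [hH, SimpleGraph.fromRel_adj]
    constructor
    · rintro ⟨hne, ⟨hf, hc⟩ | ⟨hf, hc⟩⟩
      · exact ⟨hf, Or.inl hc⟩
      · refine ⟨hf.symm, Or.inr ?_⟩
        rw [hc, pvF_nxF hd3]
    · rintro ⟨hf, hc | hc⟩
      · refine ⟨?_, Or.inl ⟨hf, hc⟩⟩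
        intro hcon
        rw [hcon] at hc
        exact nxF_ne hd3 _ hc.symm
      · refine ⟨?_, Or.inr ⟨hf.symm, ?_⟩⟩
        · intro hcon
          rw [hcon] at hc
          exact pvF_ne hd3 _ hc.symm
        · rw [hc, nxF_pvF hd3]
  -- the neighbors in H
  have hHnbr : ∀ dt : X.Dart, H.neighborSet dt =
      {D dt.toProd.1 (nxF (C dt.edge)), D dt.toProd.1 (pvF (C dt.edge))} := by
    intro dt
    ext x
    rw [SimpleGraph.mem_neighborSet, hHadj]
    constructor
    · rintro ⟨hf, hc | hc⟩
      · exact Or.inl (hDuniq _ _ x hf.symm hc)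
      · exact Or.inr (hDuniq _ _ x hf.symm hc)
    · rintro (rfl | rfl)
      · exact ⟨(hDfst _ _).symm, Or.inl (hDcol _ _)⟩
      · exact ⟨(hDfst _ _).symm, Or.inr (hDcol _ _)⟩
  have hDD : ∀ (v : V) (i j : Fin d), i ≠ j → D v i ≠ D v j := by
    intro v i j hij hcon
    apply hij
    rw [← hDcol v i, ← hDcol v j, hcon]
  have hdtD : ∀ (dt : X.Dart) (j : Fin d), C dt.edge ≠ j → dt ≠ D dt.toProd.1 j := by
    intro dt j hne hcon
    exact hne (by rw [hcon, hDcol])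
  -- degree 2 in H
  have hdeg2 : ∀ dt : X.Dart, deg H dt = 2 := by
    intro dt
    show (H.neighborSet dt).ncard = 2
    rw [hHnbr]
    exact Set.ncard_pair (hDD _ _ _ (nxF_ne_pvF hd3 _))
  -- respects clusters
  have hresp : RespectsClusters X H := fun d1 d2 h => ((hHadj d1 d2).mp h).1
  -- the symm dart is distinct, with distinct head
  have hsymm_fst : ∀ dt : X.Dart, dt.symm.toProd.1 ≠ dt.toProd.1 := by
    intro dt hcon
    rw [SimpleGraph.Dart.symm_toProd] at hcon
    exact X.irrefl (hcon ▸ dt.adj)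
  have hsymm_ne : ∀ dt : X.Dart, dt.symm ≠ dt := by
    intro dt hcon
    exact hsymm_fst dt (by rw [hcon])
  -- adjacency in the truncation
  have hTadj : ∀ d1 d2 : X.Dart, (trunc X H).Adj d1 d2 ↔
      d1 ≠ d2 ∧ (d2 = d1.symm ∨ H.Adj d1 d2) := by
    intro d1 d2
    rw [trunc, SimpleGraph.fromRel_adj]
    constructor
    · rintro ⟨hne, (h | h) | (h | h)⟩
      · exact ⟨hne, Or.inl h⟩
      · exact ⟨hne, Or.inr h⟩
      · exact ⟨hne, Or.inl (by rw [h, SimpleGraph.Dart.symm_symm])⟩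
      · exact ⟨hne, Or.inr h.symm⟩
    · rintro ⟨hne, h⟩
      exact ⟨hne, Or.inl h⟩
  -- neighbors in the truncation
  have hTnbr : ∀ dt x : X.Dart, (trunc X H).Adj dt x ↔
      (x = dt.symm ∨ x = D dt.toProd.1 (nxF (C dt.edge)) ∨
        x = D dt.toProd.1 (pvF (C dt.edge))) := by
    intro dt x
    rw [hTadj]
    constructor
    · rintro ⟨hne, h | h⟩
      · exact Or.inl h
      · have hx : x ∈ H.neighborSet dt := h
        rw [hHnbr] at hx
        exact Or.inr hx
    · rintro (rfl | rfl | rfl)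
      · exact ⟨(hsymm_ne dt).symm, Or.inl rfl⟩
      · refine ⟨hdtD dt _ (nxF_ne hd3 _).symm, Or.inr ?_⟩
        rw [hHadj]
        exact ⟨(hDfst _ _).symm, Or.inl (hDcol _ _)⟩
      · refine ⟨hdtD dt _ (pvF_ne hd3 _).symm, Or.inr ?_⟩
        rw [hHadj]
        exact ⟨(hDfst _ _).symm, Or.inr (hDcol _ _)⟩
  -- connectivity of the constituents
  have hconn : ∀ v : V, (constituent X H v).Connected := by
    intro v
    have hmem : ∀ j : Fin d, D v j ∈ cluster X v := fun j => hDfst v j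
    have key : ∀ n : ℕ, ∀ h : n < d, (constituent X H v).Reachable
        ⟨D v ⟨0, by omega⟩, hmem _⟩ ⟨D v ⟨n, h⟩, hmem _⟩ := by
      intro n
      induction n with
      | zero => intro h; exact SimpleGraph.Reachable.refl _
      | succ n ih =>
        intro h
        have hn : n < d := by omega
        have step : (constituent X H v).Adj ⟨D v ⟨n, hn⟩, hmem _⟩ ⟨D v ⟨n+1, h⟩, hmem _⟩ := by
          show H.Adj (D v ⟨n, hn⟩) (D v ⟨n+1, h⟩)
          rw [hHadj]
          refine ⟨(hDfst _ _).trans (hDfst _ _).symm, Or.inl ?_⟩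
          rw [hDcol, hDcol]
          exact Fin.ext (Nat.mod_eq_of_lt h).symm
        exact (ih hn).trans step.reachable
    rw [SimpleGraph.connected_iff]
    constructor
    · intro a b
      have ha : (⟨D v (C a.1.edge), hmem _⟩ : cluster X v) = a :=
        Subtype.ext (hDuniq _ _ a.1 a.2 rfl).symm
      have hb : (⟨D v (C b.1.edge), hmem _⟩ : cluster X v) = b :=
        Subtype.ext (hDuniq _ _ b.1 b.2 rfl).symm
      have ra := key (C a.1.edge).val (C a.1.edge).isLt
      have rb := key (C b.1.edge).val (C b.1.edge).isLt
      rw [Fin.eta] at ra rb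
      rw [ha] at ra
      rw [hb] at rb
      exact ra.symm.trans rb
    · exact ⟨⟨D v ⟨0, by omega⟩, hmem _⟩⟩
  refine ⟨H, ⟨hresp, hdeg2, hconn⟩, ?_⟩
  -- now the chromatic index of the truncation
  -- the colors of the three edges at a dart
  have hcolS : ∀ dt : X.Dart, auxCol X C s(dt, dt.symm) =
      auxMat d (C dt.edge).val (C dt.edge).val := by
    intro dt
    rw [auxCol_mk, if_neg (fun hcon => hsymm_fst dt hcon.symm), SimpleGraph.Dart.edge_symm]
  have hcolN : ∀ dt : X.Dart, auxCol X C s(dt, D dt.toProd.1 (nxF (C dt.edge))) =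
      auxCyc (C dt.edge).val (((C dt.edge).val + 1) % d) := by
    intro dt
    rw [auxCol_mk, if_pos (hDfst _ _).symm, hDcol]
    rfl
  have hcolP : ∀ dt : X.Dart, auxCol X C s(dt, D dt.toProd.1 (pvF (C dt.edge))) =
      auxCyc (C dt.edge).val (((C dt.edge).val + (d-1)) % d) := by
    intro dt
    rw [auxCol_mk, if_pos (hDfst _ _).symm, hDcol]
    rfl
  -- properness of the 3-coloring
  have hproper : IsProperEdgeColoring (trunc X H) (auxCol X C) := by
    intro e1 he1 e2 he2 hne hshare
    obtain ⟨dt, h1, h2⟩ := hshare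
    have o1 := Sym2.other_spec h1
    have o2 := Sym2.other_spec h2
    rw [← o1] at he1
    rw [← o2] at he2
    rw [SimpleGraph.mem_edgeSet] at he1 he2
    have hw : Sym2.Mem.other h1 ≠ Sym2.Mem.other h2 := by
      intro hcon
      apply hne
      rw [← o1, ← o2, hcon]
    rw [← o1, ← o2]
    have td := threeDistinct d (C dt.edge).val hd hd3 (C dt.edge).isLt
    rcases (hTnbr dt _).mp he1 with r1 | r1 | r1 <;>
      rcases (hTnbr dt _).mp he2 with r2 | r2 | r2
    · exact absurd (r1.trans r2.symm) hw
    · rw [r1, r2, hcolS, hcolN]; exact td.2.1.symm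
    · rw [r1, r2, hcolS, hcolP]; exact td.2.2.symm
    · rw [r1, r2, hcolN, hcolS]; exact td.2.1
    · exact absurd (r1.trans r2.symm) hw
    · rw [r1, r2, hcolN, hcolP]; exact td.1
    · rw [r1, r2, hcolP, hcolS]; exact td.2.2
    · rw [r1, r2, hcolP, hcolN]; exact td.1.symm
    · exact absurd (r1.trans r2.symm) hw
  have h3mem : (3:ℕ) ∈ {k | ∃ Cp : Sym2 X.Dart → Fin k,
      IsProperEdgeColoring (trunc X H) Cp} := ⟨auxCol X C, hproper⟩
  -- the lower bound
  have hlow : ∀ k ∈ {k | ∃ Cp : Sym2 X.Dart → Fin k,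
      IsProperEdgeColoring (trunc X H) Cp}, 3 ≤ k := by
    rintro k ⟨Cp, hCp⟩
    obtain ⟨v0⟩ := hV
    set dt0 : X.Dart := D v0 ⟨0, by omega⟩ with hdt0
    set n1 : X.Dart := D dt0.toProd.1 (nxF (C dt0.edge)) with hn1
    set n2 : X.Dart := D dt0.toProd.1 (pvF (C dt0.edge)) with hn2
    have hA : (trunc X H).Adj dt0 dt0.symm := (hTnbr dt0 _).mpr (Or.inl rfl)
    have hB : (trunc X H).Adj dt0 n1 := (hTnbr dt0 _).mpr (Or.inr (Or.inl rfl))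
    have hCadj : (trunc X H).Adj dt0 n2 := (hTnbr dt0 _).mpr (Or.inr (Or.inr rfl))
    have hsn1 : dt0.symm ≠ n1 := by
      intro hcon
      exact hsymm_fst dt0 (by rw [hcon, hn1, hDfst])
    have hsn2 : dt0.symm ≠ n2 := by
      intro hcon
      exact hsymm_fst dt0 (by rw [hcon, hn2, hDfst])
    have hn12 : n1 ≠ n2 := hDD _ _ _ (nxF_ne_pvF hd3 _)
    have e12 : s(dt0, dt0.symm) ≠ s(dt0, n1) := fun hcon => hsn1 (Sym2.congr_right.mp hcon)
    have e13 : s(dt0, dt0.symm) ≠ s(dt0, n2) := fun hcon => hsn2 (Sym2.congr_right.mp hcon)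
    have e23 : s(dt0, n1) ≠ s(dt0, n2) := fun hcon => hn12 (Sym2.congr_right.mp hcon)
    have hshare12 : ∃ x, x ∈ s(dt0, dt0.symm) ∧ x ∈ s(dt0, n1) :=
      ⟨dt0, Sym2.mem_mk_left _ _, Sym2.mem_mk_left _ _⟩
    have hshare13 : ∃ x, x ∈ s(dt0, dt0.symm) ∧ x ∈ s(dt0, n2) :=
      ⟨dt0, Sym2.mem_mk_left _ _, Sym2.mem_mk_left _ _⟩
    have hshare23 : ∃ x, x ∈ s(dt0, n1) ∧ x ∈ s(dt0, n2) :=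
      ⟨dt0, Sym2.mem_mk_left _ _, Sym2.mem_mk_left _ _⟩
    have m1 := (SimpleGraph.mem_edgeSet _).mpr hA
    have m2 := (SimpleGraph.mem_edgeSet _).mpr hB
    have m3 := (SimpleGraph.mem_edgeSet _).mpr hCadj
    have d12 := hCp _ m1 _ m2 e12 hshare12
    have d13 := hCp _ m1 _ m3 e13 hshare13
    have d23 := hCp _ m2 _ m3 e23 hshare23
    have hcard : ({Cp s(dt0, dt0.symm), Cp s(dt0, n1), Cp s(dt0, n2)} :
        Finset (Fin k)).card = 3 := by
      rw [Finset.card_insert_of_notMem (by simp [d12, d13]),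
        Finset.card_insert_of_notMem (by simp [d23]), Finset.card_singleton]
    have hle := Finset.card_le_univ ({Cp s(dt0, dt0.symm), Cp s(dt0, n1), Cp s(dt0, n2)} :
        Finset (Fin k))
    rw [hcard, Fintype.card_fin] at hle
    exact hle
  exact le_antisymm (Nat.sInf_le h3mem) (le_csInf ⟨3, h3mem⟩ hlow)
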